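/- (Theorem 1, noiseless recovery.) Fix positive integers m₁, m₂, s₁, s₂. Let L, I₀, K₀ be finitely supported functions ℤ×ℤ → ℝ with I₀ ≠ 0, K₀ in the simplex S and supported in the m₁×m₂ grid, and set B = I₀⊗K₀. Let (κ_i)_{i=1,…,s₁s₂} be an orthonormal basis of the space of functions supported in the s₁×s₂ grid, set σ_i = ‖(L⊗B)⊗κ_i‖_F, assume σ_i > 0 for all i, and let σ_max = max_i σ_i. Suppose τ > 0 satisfies ‖(L⊗I₀)⊗X‖_F ≥ τ·‖X‖_F for every X supported in the (m₁+s₁−1)×(m₂+s₂−1) grid. Define h(K) = ∑_{i=1}^{s₁s₂} ‖K⊗κ_i‖_F²/σ_i², and let K̂ be any function in the simplex S supported in the m₁×m₂ grid satisfying h(K̂) ≤ h(K) for every K in S supported in the m₁×m₂ grid. Then ‖K₀ − K̂‖_F ≤ √2 · σ_max / τ. -/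

import Mathlib

open Pointwise

/-- Images, kernels, and filters: finitely supported functions `ℤ × ℤ → ℝ`. -/
abbrev Img := (ℤ × ℤ) →₀ ℝ

/-- Discrete 2D convolution: `(X ⊗ Y)(i,j) = ∑_{(u,v)} X((i,j)-(u,v)) * Y(u,v)`. -/
noncomputable def conv (X Y : Img) : Img :=
  X.sum fun a xa => Y.sum fun b yb => Finsupp.single (a + b) (xa * yb)

/-- Frobenius norm `‖X‖_F = √(∑ X(i,j)²)`. -/
noncomputable def frob (X : Img) : ℝ := Real.sqrt (X.sum fun _ c => c ^ 2)

/-- Inner product `⟨X, Y⟩ = ∑ X(i,j) * Y(i,j)`. -/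
noncomputable def inner2 (X Y : Img) : ℝ := X.sum fun p c => c * Y p

/-- ℓ¹ norm `‖X‖₁ = ∑ |X(i,j)|`. -/
noncomputable def l1 (X : Img) : ℝ := X.sum fun _ c => |c|

/-- The simplex `S` of blur kernels: nonnegative entries summing to one. -/
def InSimplex (K : Img) : Prop := (∀ p, 0 ≤ K p) ∧ (K.sum fun _ c => c) = 1

/-- `X` is supported in the `a × b` grid `{0,…,a-1} × {0,…,b-1}`. -/
def SuppIn (a b : ℕ) (X : Img) : Prop :=
  ∀ p : ℤ × ℤ, ¬(0 ≤ p.1 ∧ p.1 < (a : ℤ) ∧ 0 ≤ p.2 ∧ p.2 < (b : ℤ)) → X p = 0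

/-! ### Auxiliary lemmas -/

noncomputable def amul (X Y : AddMonoidAlgebra ℝ (ℤ × ℤ)) : AddMonoidAlgebra ℝ (ℤ × ℤ) := X * Y

lemma conv_eq_mul (X Y : Img) :
    conv X Y = (amul (AddMonoidAlgebra.ofCoeff X) (AddMonoidAlgebra.ofCoeff Y)).coeff := by
  simp only [amul, AddMonoidAlgebra.mul_def, AddMonoidAlgebra.coeff_ofCoeff, conv,
    AddMonoidAlgebra.coeff_finsuppSum, AddMonoidAlgebra.coeff_single]

lemma conv_add_left (X Y Z : Img) : conv (X + Y) Z = conv X Z + conv Y Z := by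
  simp only [conv_eq_mul, amul, AddMonoidAlgebra.ofCoeff_add, add_mul,
    AddMonoidAlgebra.coeff_add]

lemma conv_sub_left (X Y Z : Img) : conv (X - Y) Z = conv X Z - conv Y Z := by
  simp only [conv_eq_mul, amul, AddMonoidAlgebra.ofCoeff_sub, sub_mul,
    AddMonoidAlgebra.coeff_sub]

lemma conv_smul_left (c : ℝ) (X Z : Img) : conv (c • X) Z = c • conv X Z := by
  simp only [conv_eq_mul, amul, AddMonoidAlgebra.ofCoeff_smul, smul_mul_assoc,
    AddMonoidAlgebra.coeff_smul]

lemma conv_support (X Y : Img) : (conv X Y).support ⊆ X.support + Y.support := by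
  classical
  rw [conv_eq_mul]
  exact AddMonoidAlgebra.support_coeff_mul_subset _ _

lemma conv_apply' (X Y : Img) (p : ℤ × ℤ) :
    conv X Y p = ∑ q ∈ Y.support, X (p - q) * Y q := by
  classical
  rw [conv, Finsupp.sum_apply, Finsupp.sum]
  have h1 : ∀ a ∈ X.support,
      (Finsupp.sum Y fun b yb => Finsupp.single (a + b) (X a * yb)) p
        = ∑ b ∈ Y.support, (if a = p - b then X a * Y b else 0) := by
    intro a _
    rw [Finsupp.sum_apply, Finsupp.sum]
    refine Finset.sum_congr rfl fun b _ => ?_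
    rw [Finsupp.single_apply]
    congr 1
    simp only [eq_iff_iff]
    constructor
    · intro h; rw [← h]; abel
    · intro h; rw [h]; abel
  rw [Finset.sum_congr rfl h1, Finset.sum_comm]
  refine Finset.sum_congr rfl fun b _ => ?_
  rw [Finset.sum_ite_eq' X.support (p - b) (fun a => X a * Y b)]
  by_cases h : p - b ∈ X.support
  · rw [if_pos h]
  · rw [if_neg h, Finsupp.notMem_support_iff.mp h, zero_mul]

lemma conv_apply_eq_sum (X Y : Img) {t : Finset (ℤ × ℤ)} (h : Y.support ⊆ t) (p : ℤ × ℤ) :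
    conv X Y p = ∑ q ∈ t, X (p - q) * Y q := by
  rw [conv_apply']
  exact Finset.sum_subset h fun q _ hq => by
    rw [Finsupp.notMem_support_iff.mp hq, mul_zero]

lemma inner2_eq_sum {X : Img} {t : Finset (ℤ × ℤ)} (h : X.support ⊆ t) (Y : Img) :
    inner2 X Y = ∑ p ∈ t, X p * Y p := by
  rw [inner2, Finsupp.sum]
  exact Finset.sum_subset h (fun p _ hp => by
    rw [Finsupp.notMem_support_iff.mp hp, zero_mul])

lemma inner2_comm (X Y : Img) : inner2 X Y = inner2 Y X := by
  rw [inner2_eq_sum (Finset.subset_union_left (s₂ := Y.support)) Y,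
    inner2_eq_sum (Finset.subset_union_right (s₁ := X.support)) X]
  exact Finset.sum_congr rfl fun p _ => mul_comm _ _

lemma inner2_add_left (X Y Z : Img) : inner2 (X + Y) Z = inner2 X Z + inner2 Y Z := by
  rw [inner2_eq_sum (t := X.support ∪ Y.support) Finsupp.support_add Z,
    inner2_eq_sum (Finset.subset_union_left (s₂ := Y.support)) Z,
    inner2_eq_sum (Finset.subset_union_right (s₁ := X.support)) Z,
    ← Finset.sum_add_distrib]
  exact Finset.sum_congr rfl fun p _ => by rw [Finsupp.add_apply, add_mul]

lemma inner2_sub_left (X Y Z : Img) : inner2 (X - Y) Z = inner2 X Z - inner2 Y Z := by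
  rw [inner2_eq_sum (t := X.support ∪ Y.support) (Finsupp.support_sub) Z,
    inner2_eq_sum (Finset.subset_union_left (s₂ := Y.support)) Z,
    inner2_eq_sum (Finset.subset_union_right (s₁ := X.support)) Z,
    ← Finset.sum_sub_distrib]
  exact Finset.sum_congr rfl fun p _ => by rw [Finsupp.sub_apply, sub_mul]

lemma inner2_smul_left (c : ℝ) (X Z : Img) : inner2 (c • X) Z = c * inner2 X Z := by
  rw [inner2_eq_sum (t := X.support) Finsupp.support_smul Z,
    inner2_eq_sum (le_refl X.support) Z, Finset.mul_sum]
  exact Finset.sum_congr rfl fun p _ => by rw [Finsupp.smul_apply, smul_eq_mul, mul_assoc]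

lemma inner2_add_right (X Y Z : Img) : inner2 Z (X + Y) = inner2 Z X + inner2 Z Y := by
  rw [inner2_comm, inner2_add_left, inner2_comm X Z, inner2_comm Y Z]

lemma inner2_sub_right (X Y Z : Img) : inner2 Z (X - Y) = inner2 Z X - inner2 Z Y := by
  rw [inner2_comm, inner2_sub_left, inner2_comm X Z, inner2_comm Y Z]

lemma inner2_smul_right (c : ℝ) (X Z : Img) : inner2 Z (c • X) = c * inner2 Z X := by
  rw [inner2_comm, inner2_smul_left, inner2_comm X Z]

lemma inner2_self_nonneg (X : Img) : 0 ≤ inner2 X X := by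
  rw [inner2_eq_sum (le_refl X.support) X]
  exact Finset.sum_nonneg fun p _ => mul_self_nonneg _

lemma frob_sq (X : Img) : frob X ^ 2 = inner2 X X := by
  have h : (X.sum fun _ c => c ^ 2) = inner2 X X := by
    rw [inner2, Finsupp.sum, Finsupp.sum]
    exact Finset.sum_congr rfl fun p _ => sq (X p)
  rw [frob, Real.sq_sqrt (h ▸ inner2_self_nonneg X), h]

lemma frob_nonneg (X : Img) : 0 ≤ frob X := Real.sqrt_nonneg _

/-- Parallelogram-type identity used for the midpoint argument. -/
lemma par_id (u v : Img) :
    inner2 (u - v) (u - v)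
      = 2 * inner2 u u + 2 * inner2 v v
        - 4 * inner2 ((2:ℝ)⁻¹ • (u + v)) ((2:ℝ)⁻¹ • (u + v)) := by
  simp only [inner2_sub_left, inner2_sub_right, inner2_add_left, inner2_add_right,
    inner2_smul_left, inner2_smul_right, inner2_comm u v]
  ring

/-- inner2 as a linear map in the first argument. -/
noncomputable def innerL (Y : Img) : Img →ₗ[ℝ] ℝ where
  toFun X := inner2 X Y
  map_add' X X' := inner2_add_left X X' Y
  map_smul' c X := inner2_smul_left c X Y

lemma parseval {n : ℕ} (G : Finset (ℤ × ℤ)) (hG : G.card = n)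
    (κ : Fin n → Img) (hκ : ∀ i, (κ i).support ⊆ G)
    (hortho : ∀ i j, inner2 (κ i) (κ j) = if i = j then 1 else 0)
    (f : Img) (hf : f.support ⊆ G) :
    ∑ i, (inner2 f (κ i)) ^ 2 = inner2 f f := by
  classical
  set V := Finsupp.supported ℝ ℝ (↑G : Set (ℤ × ℤ)) with hV
  have memV : ∀ (g : Img), g.support ⊆ G → g ∈ V := by
    intro g hg
    rw [hV, Finsupp.mem_supported]
    exact_mod_cast hg
  have e : V ≃ₗ[ℝ] ((↑G : Set (ℤ × ℤ)) →₀ ℝ) := Finsupp.supportedEquivFinsupp _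
  haveI : FiniteDimensional ℝ V := Module.Finite.equiv e.symm
  have hdim : Module.finrank ℝ V = n := by
    rw [e.finrank_eq, Module.finrank_finsupp_self, ← hG]
    simp [Fintype.card_coe]
  set T : V →ₗ[ℝ] (Fin n → ℝ) :=
    LinearMap.pi (fun i => (innerL (κ i)).comp V.subtype) with hT
  have hTapply : ∀ (v : V) (i : Fin n), T v i = inner2 (↑v) (κ i) := fun v i => rfl
  set κ' : Fin n → V := fun i => ⟨κ i, memV _ (hκ i)⟩ with hκ'
  have hTκ : ∀ j, T (κ' j) = Pi.single j 1 := by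
    intro j
    funext i
    rw [hTapply, hortho j i]
    by_cases h : j = i
    · subst h; simp
    · rw [if_neg h, Pi.single_apply, if_neg (fun hh => h hh.symm)]
  have hsurj : Function.Surjective T := by
    rw [← LinearMap.range_eq_top, ← top_le_iff, ← (Pi.basisFun ℝ (Fin n)).span_eq,
      Submodule.span_le]
    rintro x ⟨j, rfl⟩
    rw [Pi.basisFun_apply]
    exact ⟨κ' j, hTκ j⟩
  have hinj : Function.Injective T :=
    by
      have H : Module.finrank ℝ V = Module.finrank ℝ (Fin n → ℝ) := by
        rw [hdim, Module.finrank_fintype_fun_eq_card, Fintype.card_fin]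
      exact (LinearMap.injective_iff_surjective_of_finrank_eq_finrank (K := ℝ) (V := V) (V₂ := Fin n → ℝ) (f := T) H).mpr hsurj
  set c : Fin n → ℝ := fun i => inner2 f (κ i) with hc
  set g : V := ∑ i, c i • κ' i with hg
  have hgf : g = (⟨f, memV f hf⟩ : V) := by
    apply hinj
    funext j
    rw [hTapply, hTapply]
    have hcoe : ((g : V) : Img) = ∑ i, c i • κ i := by
      rw [hg]; push_cast; rfl
    rw [hcoe]
    have hlin : inner2 (∑ i, c i • κ i) (κ j) = ∑ i, c i * inner2 (κ i) (κ j) := by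
      rw [show inner2 (∑ i, c i • κ i) (κ j) = innerL (κ j) (∑ i, c i • κ i) from rfl,
        map_sum]
      exact Finset.sum_congr rfl fun i _ => by
        rw [show innerL (κ j) (c i • κ i) = inner2 (c i • κ i) (κ j) from rfl,
          inner2_smul_left]
    rw [hlin]
    simp only [hortho, mul_ite, mul_one, mul_zero]
    rw [Finset.sum_ite_eq' Finset.univ j c, if_pos (Finset.mem_univ j)]
  have hfg : f = ∑ i, c i • κ i := by
    have h2 := congrArg (fun v : V => (v : Img)) hgf
    simp only at h2
    rw [← h2, hg]
    push_cast
    rfl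
  calc ∑ i, (inner2 f (κ i)) ^ 2 = ∑ i, c i * inner2 (κ i) f := by
        refine Finset.sum_congr rfl fun i _ => ?_
        rw [sq, inner2_comm (κ i) f]
      _ = inner2 (∑ i, c i • κ i) f := by
        rw [show inner2 (∑ i, c i • κ i) f = innerL f (∑ i, c i • κ i) from rfl, map_sum]
        exact Finset.sum_congr rfl fun i _ => by
          rw [show innerL f (c i • κ i) = inner2 (c i • κ i) f from rfl, inner2_smul_left]
      _ = inner2 f f := by rw [← hfg]

/-- Coordinatewise bound on the support. -/
def Bnd (a1 a2 : ℤ) (X : Img) : Prop :=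
  ∀ p : ℤ × ℤ, X p ≠ 0 → 0 ≤ p.1 ∧ p.1 ≤ a1 ∧ 0 ≤ p.2 ∧ p.2 ≤ a2

lemma suppIn_bnd {a b : ℕ} {X : Img} (h : SuppIn a b X) : Bnd ((a:ℤ) - 1) ((b:ℤ) - 1) X := by
  intro p hp
  by_contra hcon
  exact hp (h p (by omega))

lemma conv_bnd {a1 a2 b1 b2 : ℤ} {X Y : Img} (hX : Bnd a1 a2 X) (hY : Bnd b1 b2 Y) :
    Bnd (a1 + b1) (a2 + b2) (conv X Y) := by
  classical
  intro p hp
  have hmem : p ∈ (conv X Y).support := Finsupp.mem_support_iff.mpr hp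
  have := conv_support X Y hmem
  rw [Finset.mem_add] at this
  obtain ⟨q, hq, r, hr, rfl⟩ := this
  have h1 := hX q (Finsupp.mem_support_iff.mp hq)
  have h2 := hY r (Finsupp.mem_support_iff.mp hr)
  simp only [Prod.fst_add, Prod.snd_add]
  omega
/-- Theorem 1 (noiseless recovery): any minimizer `K̂` of the regularizer over the simplex
satisfies `‖K₀ - K̂‖_F ≤ √2 σ_max / τ`. -/
theorem recovery_noiseless (m₁ m₂ s₁ s₂ : ℕ)
    (hm₁ : 0 < m₁) (hm₂ : 0 < m₂) (hs₁ : 0 < s₁) (hs₂ : 0 < s₂)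
    (L I₀ K₀ B : Img) (hI₀ : I₀ ≠ 0)
    (hK₀ : InSimplex K₀) (hK₀supp : SuppIn m₁ m₂ K₀)
    (hB : B = conv I₀ K₀)
    (κ : Fin (s₁ * s₂) → Img) (hκsupp : ∀ i, SuppIn s₁ s₂ (κ i))
    (hortho : ∀ i j, inner2 (κ i) (κ j) = if i = j then 1 else 0)
    (σ : Fin (s₁ * s₂) → ℝ) (hσ : ∀ i, σ i = frob (conv (conv L B) (κ i)))
    (hσpos : ∀ i, 0 < σ i)
    (σmax : ℝ) (hσmax : IsGreatest (Set.range σ) σmax)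
    (τ : ℝ) (hτ : 0 < τ)
    (hsharp : ∀ X : Img, SuppIn (m₁ + s₁ - 1) (m₂ + s₂ - 1) X →
      τ * frob X ≤ frob (conv (conv L I₀) X))
    (Khat : Img) (hKhat : InSimplex Khat) (hKhatsupp : SuppIn m₁ m₂ Khat)
    (hmin : ∀ K : Img, InSimplex K → SuppIn m₁ m₂ K →
      ∑ i, frob (conv Khat (κ i)) ^ 2 / (σ i) ^ 2 ≤
        ∑ i, frob (conv K (κ i)) ^ 2 / (σ i) ^ 2) :
    frob (K₀ - Khat) ≤ Real.sqrt 2 * σmax / τ := by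
  classical
  have hnpos : 0 < s₁ * s₂ := Nat.mul_pos hs₁ hs₂
  set D : Img := K₀ - Khat with hD
  have hσmax_pos : 0 < σmax := lt_of_lt_of_le (hσpos ⟨0, hnpos⟩) (hσmax.2 ⟨⟨0, hnpos⟩, rfl⟩)
  have hσle : ∀ i, σ i ≤ σmax := fun i => hσmax.2 ⟨i, rfl⟩
  -- support bounds
  have hK₀b : Bnd ((m₁:ℤ) - 1) ((m₂:ℤ) - 1) K₀ := suppIn_bnd hK₀supp
  have hKhatb : Bnd ((m₁:ℤ) - 1) ((m₂:ℤ) - 1) Khat := suppIn_bnd hKhatsupp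
  have hκb : ∀ i, Bnd ((s₁:ℤ) - 1) ((s₂:ℤ) - 1) (κ i) := fun i => suppIn_bnd (hκsupp i)
  have hDb : Bnd ((m₁:ℤ) - 1) ((m₂:ℤ) - 1) D := by
    intro p hp
    rw [hD, Finsupp.sub_apply] at hp
    rcases ne_or_eq (K₀ p) 0 with h | h
    · exact hK₀b p h
    · exact hKhatb p (by rw [h, zero_sub] at hp; simpa using hp)
  -- Step A : τ ‖K₀ ⊗ κ_i‖ ≤ σ i
  have hstepA : ∀ i, τ * frob (conv K₀ (κ i)) ≤ σ i := by
    intro i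
    have hsupp : SuppIn (m₁ + s₁ - 1) (m₂ + s₂ - 1) (conv K₀ (κ i)) := by
      have hb := conv_bnd hK₀b (hκb i)
      intro p hp
      by_contra hne
      have := hb p hne
      omega
    have h1 := hsharp _ hsupp
    have h2 : conv (conv L I₀) (conv K₀ (κ i)) = conv (conv L B) (κ i) := by
      rw [hB]
      simp only [conv_eq_mul, amul, AddMonoidAlgebra.ofCoeff_coeff]
      congr 1
      ring
    rw [h2, ← hσ i] at h1
    exact h1
  have hratioA : ∀ i, frob (conv K₀ (κ i)) ^ 2 / σ i ^ 2 ≤ 1 / τ ^ 2 := by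
    intro i
    rw [div_le_div_iff₀ (pow_pos (hσpos i) 2) (pow_pos hτ 2)]
    have h1 := hstepA i
    have h2 : (τ * frob (conv K₀ (κ i))) ^ 2 ≤ σ i ^ 2 :=
      pow_le_pow_left₀ (mul_nonneg hτ.le (frob_nonneg _)) h1 2
    rw [mul_pow] at h2
    nlinarith
  -- Step B : midpoint argument
  set M : Img := (2:ℝ)⁻¹ • (K₀ + Khat) with hM
  have hMsimplex : InSimplex M := by
    constructor
    · intro p
      rw [hM, Finsupp.smul_apply, Finsupp.add_apply, smul_eq_mul]
      have := hK₀.1 p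
      have := hKhat.1 p
      positivity
    · rw [hM, Finsupp.sum_smul_index (fun p => rfl),
        Finsupp.sum_add_index' (fun p => mul_zero _) (fun p b₁ b₂ => mul_add _ _ _)]
      have h1 : ∀ X : Img, (X.sum fun _ c => (2:ℝ)⁻¹ * c) = (2:ℝ)⁻¹ * X.sum (fun _ c => c) := by
        intro X
        rw [Finsupp.mul_sum]
      rw [h1, h1, hK₀.2, hKhat.2]
      norm_num
  have hMsupp : SuppIn m₁ m₂ M := by
    intro p hp
    rw [hM, Finsupp.smul_apply, Finsupp.add_apply, hK₀supp p hp, hKhatsupp p hp]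
    simp
  have hminM := hmin M hMsimplex hMsupp
  have hpar : ∀ i, frob (conv D (κ i)) ^ 2
      = 2 * frob (conv K₀ (κ i)) ^ 2 + 2 * frob (conv Khat (κ i)) ^ 2
        - 4 * frob (conv M (κ i)) ^ 2 := by
    intro i
    have hconvM : conv M (κ i) = (2:ℝ)⁻¹ • (conv K₀ (κ i) + conv Khat (κ i)) := by
      rw [hM, conv_smul_left, conv_add_left]
    have hconvD : conv D (κ i) = conv K₀ (κ i) - conv Khat (κ i) := by
      rw [hD, conv_sub_left]
    rw [hconvM, hconvD, frob_sq, frob_sq, frob_sq, frob_sq]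
    exact par_id _ _
  -- Q(D) ≤ 2 n / τ²
  have hQD : ∑ i, frob (conv D (κ i)) ^ 2 / σ i ^ 2 ≤ 2 * (s₁ * s₂ : ℕ) / τ ^ 2 := by
    have hQexp : ∑ i, frob (conv D (κ i)) ^ 2 / σ i ^ 2
        = 2 * (∑ i, frob (conv K₀ (κ i)) ^ 2 / σ i ^ 2)
          + 2 * (∑ i, frob (conv Khat (κ i)) ^ 2 / σ i ^ 2)
          - 4 * (∑ i, frob (conv M (κ i)) ^ 2 / σ i ^ 2) := by
      rw [Finset.mul_sum, Finset.mul_sum, Finset.mul_sum, ← Finset.sum_add_distrib,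
        ← Finset.sum_sub_distrib]
      refine Finset.sum_congr rfl fun i _ => ?_
      rw [hpar i]
      ring
    have hQ0 : ∑ i, frob (conv K₀ (κ i)) ^ 2 / σ i ^ 2 ≤ ((s₁ * s₂ : ℕ) : ℝ) / τ ^ 2 := by
      calc ∑ i, frob (conv K₀ (κ i)) ^ 2 / σ i ^ 2 ≤ ∑ _i : Fin (s₁ * s₂), 1 / τ ^ 2 :=
            Finset.sum_le_sum fun i _ => hratioA i
        _ = ((s₁ * s₂ : ℕ) : ℝ) / τ ^ 2 := by
            rw [Finset.sum_const, Finset.card_univ, Fintype.card_fin, nsmul_eq_mul]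
            ring
    have hQhat_nonneg : 0 ≤ ∑ i, frob (conv Khat (κ i)) ^ 2 / σ i ^ 2 :=
      Finset.sum_nonneg fun i _ => by positivity
    rw [hQexp]
    have h2n : 2 * ((s₁ * s₂ : ℕ) : ℝ) / τ ^ 2
        = 2 * (((s₁ * s₂ : ℕ) : ℝ) / τ ^ 2) := by ring
    rw [h2n]
    linarith
  -- Step C : Parseval
  set G : Finset (ℤ × ℤ) := Finset.Icc (0:ℤ) ((s₁:ℤ) - 1) ×ˢ Finset.Icc (0:ℤ) ((s₂:ℤ) - 1)
    with hG
  have hGcard : G.card = s₁ * s₂ := by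
    rw [hG, Finset.card_product, Int.card_Icc, Int.card_Icc]
    have h1 : ((s₁:ℤ) - 1 + 1 - 0).toNat = s₁ := by omega
    have h2 : ((s₂:ℤ) - 1 + 1 - 0).toNat = s₂ := by omega
    rw [h1, h2]
  have hmemG : ∀ p : ℤ × ℤ, p ∈ G ↔ (0 ≤ p.1 ∧ p.1 ≤ (s₁:ℤ) - 1 ∧ 0 ≤ p.2 ∧ p.2 ≤ (s₂:ℤ) - 1) := by
    intro p
    rw [hG, Finset.mem_product, Finset.mem_Icc, Finset.mem_Icc]
    tauto
  have hκG : ∀ i, (κ i).support ⊆ G := by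
    intro i p hp
    rw [hmemG]
    exact hκb i p (Finsupp.mem_support_iff.mp hp)
  set P : Finset (ℤ × ℤ) :=
    Finset.Icc (0:ℤ) ((m₁:ℤ) + (s₁:ℤ) - 2) ×ˢ Finset.Icc (0:ℤ) ((m₂:ℤ) + (s₂:ℤ) - 2) with hP
  have hmemP : ∀ p : ℤ × ℤ, p ∈ P ↔
      (0 ≤ p.1 ∧ p.1 ≤ (m₁:ℤ) + (s₁:ℤ) - 2 ∧ 0 ≤ p.2 ∧ p.2 ≤ (m₂:ℤ) + (s₂:ℤ) - 2) := by
    intro p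
    rw [hP, Finset.mem_product, Finset.mem_Icc, Finset.mem_Icc]
    tauto
  have hDκP : ∀ i, (conv D (κ i)).support ⊆ P := by
    intro i p hp
    rw [hmemP]
    have := conv_bnd hDb (hκb i) p (Finsupp.mem_support_iff.mp hp)
    omega
  have hpoint : ∀ p : ℤ × ℤ,
      ∑ i, (conv D (κ i) p) ^ 2 = ∑ q ∈ G, (D (p - q)) ^ 2 := by
    intro p
    set f : Img := ∑ q ∈ G, Finsupp.single q (D (p - q)) with hf
    have hfapply : ∀ q' : ℤ × ℤ, f q' = if q' ∈ G then D (p - q') else 0 := by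
      intro q'
      rw [hf, Finset.sum_apply']
      rw [Finset.sum_congr rfl (fun q _ => Finsupp.single_apply (a := q) (a' := q')
        (b := D (p - q)))]
      rw [Finset.sum_ite_eq' G q' (fun q => D (p - q))]
    have hfsupp : f.support ⊆ G := by
      intro q' hq'
      have := Finsupp.mem_support_iff.mp hq'
      rw [hfapply q'] at this
      by_contra hq
      rw [if_neg hq] at this
      exact this rfl
    have hfconv : ∀ i, inner2 f (κ i) = conv D (κ i) p := by
      intro i
      rw [inner2_eq_sum hfsupp (κ i), conv_apply_eq_sum D (κ i) (hκG i) p]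
      refine Finset.sum_congr rfl fun q hq => ?_
      rw [hfapply q, if_pos hq]
    have hfself : inner2 f f = ∑ q ∈ G, (D (p - q)) ^ 2 := by
      rw [inner2_eq_sum hfsupp f]
      refine Finset.sum_congr rfl fun q hq => ?_
      rw [hfapply q, if_pos hq, sq]
    rw [← hfself, ← parseval G hGcard κ hκG hortho f hfsupp]
    exact Finset.sum_congr rfl fun i _ => by rw [hfconv i]
  have hparseval : ∑ i, frob (conv D (κ i)) ^ 2 = ((s₁ * s₂ : ℕ) : ℝ) * inner2 D D := by
    have h1 : ∀ i : Fin (s₁ * s₂), frob (conv D (κ i)) ^ 2 = ∑ p ∈ P, (conv D (κ i) p) ^ 2 := by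
      intro i
      rw [frob_sq, inner2_eq_sum (hDκP i) (conv D (κ i))]
      exact Finset.sum_congr rfl fun p _ => (sq _).symm
    rw [Finset.sum_congr rfl fun i _ => h1 i, Finset.sum_comm,
      Finset.sum_congr rfl fun p _ => hpoint p, Finset.sum_comm]
    have h2 : ∀ q ∈ G, ∑ p ∈ P, (D (p - q)) ^ 2 = inner2 D D := by
      intro q hq
      rw [hmemG] at hq
      have himg : D.support ⊆ P.image (fun p => p - q) := by
        intro p' hp'
        have hb := hDb p' (Finsupp.mem_support_iff.mp hp')
        rw [Finset.mem_image]
        refine ⟨p' + q, ?_, by abel⟩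
        rw [hmemP]
        simp only [Prod.fst_add, Prod.snd_add]
        omega
      rw [inner2_eq_sum himg D,
        Finset.sum_image (fun p _ p' _ h => by
          have : p - q + q = p' - q + q := by rw [h]
          simpa using this)]
      exact Finset.sum_congr rfl fun p _ => sq _
    rw [Finset.sum_congr rfl h2, Finset.sum_const, nsmul_eq_mul, hGcard]
  -- combine everything
  have hsum_le : ∑ i, frob (conv D (κ i)) ^ 2
      ≤ σmax ^ 2 * ∑ i, frob (conv D (κ i)) ^ 2 / σ i ^ 2 := by
    rw [Finset.mul_sum]
    refine Finset.sum_le_sum fun i _ => ?_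
    have hσi := hσpos i
    have hσ2 : (σ i) ^ 2 ≠ 0 := ne_of_gt (pow_pos hσi 2)
    have h2 : σ i ^ 2 ≤ σmax ^ 2 := pow_le_pow_left₀ hσi.le (hσle i) 2
    have h3 : 0 ≤ frob (conv D (κ i)) ^ 2 * (σ i ^ 2)⁻¹ := by positivity
    calc frob (conv D (κ i)) ^ 2
        = frob (conv D (κ i)) ^ 2 * (σ i ^ 2)⁻¹ * σ i ^ 2 :=
          (inv_mul_cancel_right₀ hσ2 _).symm
      _ ≤ frob (conv D (κ i)) ^ 2 * (σ i ^ 2)⁻¹ * σmax ^ 2 :=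
          mul_le_mul_of_nonneg_left h2 h3
      _ = σmax ^ 2 * (frob (conv D (κ i)) ^ 2 / σ i ^ 2) := by ring
  have hfinal_sq : frob D ^ 2 ≤ 2 * σmax ^ 2 / τ ^ 2 := by
    have h1 : ((s₁ * s₂ : ℕ) : ℝ) * frob D ^ 2 ≤ σmax ^ 2 * (2 * (s₁ * s₂ : ℕ) / τ ^ 2) := by
      rw [frob_sq, ← hparseval]
      calc ∑ i, frob (conv D (κ i)) ^ 2
          ≤ σmax ^ 2 * ∑ i, frob (conv D (κ i)) ^ 2 / σ i ^ 2 := hsum_le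
        _ ≤ σmax ^ 2 * (2 * (s₁ * s₂ : ℕ) / τ ^ 2) :=
            mul_le_mul_of_nonneg_left hQD (by positivity)
    have hnr : (0:ℝ) < ((s₁ * s₂ : ℕ) : ℝ) := by exact_mod_cast hnpos
    have h2 : σmax ^ 2 * (2 * ((s₁ * s₂ : ℕ) : ℝ) / τ ^ 2)
        = ((s₁ * s₂ : ℕ) : ℝ) * (2 * σmax ^ 2 / τ ^ 2) := by ring
    rw [h2] at h1
    exact le_of_mul_le_mul_left h1 hnr
  have hrhs_nonneg : 0 ≤ Real.sqrt 2 * σmax / τ := by positivity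
  have hrhs_sq : (Real.sqrt 2 * σmax / τ) ^ 2 = 2 * σmax ^ 2 / τ ^ 2 := by
    rw [div_pow, mul_pow, Real.sq_sqrt (by norm_num : (0:ℝ) ≤ 2)]
  rw [← Real.sqrt_sq (frob_nonneg D), ← Real.sqrt_sq hrhs_nonneg]
  apply Real.sqrt_le_sqrt
  rw [hrhs_sq]
  exact hfinal_sq
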